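/- Let v₁,v₂,v₃,v₄,v₅ be unit vectors in ℝ² occurring in this cyclic order on the unit circle (i.e., there exist real numbers φ₁ < φ₂ < φ₃ < φ₄ < φ₅ < φ₁ + 2π with vᵢ = (cos φᵢ, sin φᵢ)), and let λ₁,…,λ₅ ∈ (0,1) satisfy λ₁+⋯+λ₅ = 1 and λ₁v₁+⋯+λ₅v₅ = 0. Then there exist at least three distinct indices j ∈ {1,…,5} such that the origin of ℝ² belongs to the convex hull of the four points {vᵢ : i ∈ {1,…,5}, i ≠ j}. -/

import Mathlib

open Real


lemma mem_aux (v : Fin 5 → ℝ × ℝ) (j : Fin 5) (w : Fin 5 → ℝ)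
    (h0 : ∀ i, 0 ≤ w i) (hj : w j = 0) (hpos : 0 < ∑ i, w i)
    (hc : ∑ i, w i • v i = 0) : (0 : ℝ × ℝ) ∈ convexHull ℝ (v '' {i : Fin 5 | i ≠ j}) := by
  have hsum' : ∑ i ∈ Finset.univ.erase j, w i = ∑ i, w i :=
    Finset.sum_erase _ (by rw [hj])
  have hc' : ∑ i ∈ Finset.univ.erase j, w i • v i = 0 := by
    rw [Finset.sum_erase _ (by rw [hj, zero_smul])]; exact hc
  have := Finset.centerMass_mem_convexHull (s := v '' {i : Fin 5 | i ≠ j})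
    (Finset.univ.erase j) (w := w) (fun i _ => h0 i) (by rw [hsum']; exact hpos)
    (z := v) (fun i hi => ⟨i, (Finset.mem_erase.1 hi).1, rfl⟩)
  rwa [Finset.centerMass, hc', smul_zero] at this

lemma trig_aux (x y z : ℝ) (hxy : x < y) (hyz : y < z) (h : z - x < π) :
    ∃ α β : ℝ, 0 ≤ α ∧ 0 ≤ β ∧ 1 ≤ α + β ∧
      (Real.cos y, Real.sin y) = α • (Real.cos x, Real.sin x) + β • (Real.cos z, Real.sin z) := by
  have hs : 0 < Real.sin (z - x) := Real.sin_pos_of_pos_of_lt_pi (by linarith) h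
  have h1 : 0 ≤ Real.sin (z - y) :=
    Real.sin_nonneg_of_nonneg_of_le_pi (by linarith) (by linarith)
  have h2 : 0 ≤ Real.sin (y - x) :=
    Real.sin_nonneg_of_nonneg_of_le_pi (by linarith) (by linarith)
  refine ⟨Real.sin (z - y) / Real.sin (z - x), Real.sin (y - x) / Real.sin (z - x),
    div_nonneg h1 hs.le, div_nonneg h2 hs.le, ?_, ?_⟩
  · rw [← add_div, le_div_iff₀ hs, one_mul]
    have hzx : z - x = (z - y) + (y - x) := by ring
    rw [hzx, Real.sin_add]
    nlinarith [Real.cos_le_one (z - y), Real.cos_le_one (y - x)]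
  · have h3 : Real.sin (z - y) * Real.cos x + Real.sin (y - x) * Real.cos z
        = Real.sin (z - x) * Real.cos y := by
      simp only [Real.sin_sub]; ring
    have h4 : Real.sin (z - y) * Real.sin x + Real.sin (y - x) * Real.sin z
        = Real.sin (z - x) * Real.sin y := by
      simp only [Real.sin_sub]; ring
    have hne := hs.ne'
    apply Prod.ext <;> simp only [Prod.fst_add, Prod.snd_add, Prod.smul_fst, Prod.smul_snd,
      smul_eq_mul] <;> field_simp <;> linarith [h3, h4]

lemma good_aux (v : Fin 5 → ℝ × ℝ) (lam : Fin 5 → ℝ) (hlam : ∀ i, 0 < lam i)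
    (hlsum : ∑ i, lam i = 1)
    (hv0 : ∑ i, lam i • v i = 0) (j p q : Fin 5) (hpj : p ≠ j) (hqj : q ≠ j) (hpq : p ≠ q)
    (x y z : ℝ) (hp : v p = (Real.cos x, Real.sin x)) (hjv : v j = (Real.cos y, Real.sin y))
    (hq : v q = (Real.cos z, Real.sin z))
    (hxy : x < y) (hyz : y < z) (hzx : z - x ≤ π) :
    (0 : ℝ × ℝ) ∈ convexHull ℝ (v '' {i : Fin 5 | i ≠ j}) := by
  rcases lt_or_eq_of_le hzx with hlt | heq
  · obtain ⟨α, β, hα, hβ, hab, hcomb⟩ := trig_aux x y z hxy hyz hlt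
    have hvj : v j = α • v p + β • v q := by rw [hp, hjv, hq]; exact hcomb
    set w : Fin 5 → ℝ := fun i =>
      lam i + lam j * α * (if i = p then 1 else 0) + lam j * β * (if i = q then 1 else 0)
        - lam j * (if i = j then 1 else 0) with hw
    have ha' : 0 ≤ lam j * α := mul_nonneg (hlam j).le hα
    have hb' : 0 ≤ lam j * β := mul_nonneg (hlam j).le hβ
    have hwj : w j = 0 := by
      simp [hw, Ne.symm hpj, Ne.symm hqj]
    have h0 : ∀ i, 0 ≤ w i := by
      intro i
      by_cases hij : i = j
      · rw [hij, hwj]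
      · simp only [hw, if_neg hij]
        have := (hlam i).le
        split_ifs <;> nlinarith
    have hsw : ∑ i, w i = 1 + lam j * α + lam j * β - lam j := by
      simp only [hw, Finset.sum_sub_distrib, Finset.sum_add_distrib, ← Finset.mul_sum,
        Finset.sum_ite_eq', Finset.mem_univ, if_pos, hlsum]
      ring
    have hpos : 0 < ∑ i, w i := by
      rw [hsw]; nlinarith [hlam j]
    have hc : ∑ i, w i • v i = 0 := by
      have key : ∀ i, w i • v i = lam i • v i + (if i = p then (lam j * α) • v i else 0)
          + (if i = q then (lam j * β) • v i else 0) - (if i = j then lam j • v i else 0) := by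
        intro i
        simp only [hw]
        split_ifs <;> simp [add_smul, sub_smul, mul_smul] <;> abel
      simp only [key, Finset.sum_sub_distrib, Finset.sum_add_distrib,
        Finset.sum_ite_eq', Finset.mem_univ, if_pos, hv0]
      rw [hvj, smul_add, smul_smul, smul_smul]
      abel
    exact mem_aux v j w h0 hwj hpos hc
  · -- z = x + π : v q = - v p
    have hzeq : z = x + π := by linarith
    have hvq : v q = -v p := by
      rw [hp, hq, hzeq, Real.cos_add, Real.sin_add, Real.cos_pi, Real.sin_pi, Prod.neg_mk]
      norm_num
    set w : Fin 5 → ℝ := fun i => (if i = p then 1 else 0) + (if i = q then 1 else 0) with hw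
    have hwj : w j = 0 := by
      simp [hw, Ne.symm hpj, Ne.symm hqj]
    have h0 : ∀ i, 0 ≤ w i := by
      intro i; simp only [hw]; split_ifs <;> norm_num
    have hpos : 0 < ∑ i, w i := by
      simp only [hw, Finset.sum_add_distrib, Finset.sum_ite_eq', Finset.mem_univ, if_pos]
      norm_num
    have hc : ∑ i, w i • v i = 0 := by
      have key : ∀ i, w i • v i = (if i = p then v i else 0) + (if i = q then v i else 0) := by
        intro i; simp only [hw]; split_ifs <;> simp [add_smul]
      simp only [key, Finset.sum_add_distrib, Finset.sum_ite_eq', Finset.mem_univ, if_pos]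
      rw [hvq]; abel
    exact mem_aux v j w h0 hwj hpos hc

lemma card_aux : ∀ b : Fin 5 → Bool,
    (¬(b 0 = true ∧ b 2 = true)) → (¬(b 1 = true ∧ b 3 = true)) →
    (¬(b 2 = true ∧ b 4 = true)) → (¬(b 0 = true ∧ b 3 = true)) →
    (¬(b 1 = true ∧ b 4 = true)) →
    3 ≤ (Finset.univ.filter (fun j => b j = false)).card := by decide

/-- If five unit vectors `v₁,…,v₅` occur in cyclic order on the unit circle and
`∑ λᵢ vᵢ = 0` for weights `λᵢ ∈ (0,1)` with `∑ λᵢ = 1`, then there are at least three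
indices `j` such that the origin lies in the convex hull of the remaining four vectors. -/
theorem stmt_1 (v : Fin 5 → ℝ × ℝ) (lam : Fin 5 → ℝ)
    (hlam : ∀ i, lam i ∈ Set.Ioo (0 : ℝ) 1)
    (φ : Fin 5 → ℝ)
    (hφ : φ 0 < φ 1 ∧ φ 1 < φ 2 ∧ φ 2 < φ 3 ∧ φ 3 < φ 4 ∧ φ 4 < φ 0 + 2 * π)
    (hv : ∀ i, v i = (Real.cos (φ i), Real.sin (φ i)))
    (hsum : lam 0 + lam 1 + lam 2 + lam 3 + lam 4 = 1)
    (hv0 : lam 0 • v 0 + lam 1 • v 1 + lam 2 • v 2 + lam 3 • v 3 + lam 4 • v 4 = 0) :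
    ∃ J : Finset (Fin 5), 3 ≤ J.card ∧
      ∀ j ∈ J, (0 : ℝ × ℝ) ∈ convexHull ℝ (v '' {i : Fin 5 | i ≠ j}) := by
  obtain ⟨h01, h12, h23, h34, h40⟩ := hφ
  have hlam' : ∀ i, 0 < lam i := fun i => (hlam i).1
  have hlsum : ∑ i, lam i = 1 := by rw [Fin.sum_univ_five]; exact hsum
  have hv0' : ∑ i, lam i • v i = 0 := by rw [Fin.sum_univ_five]; exact hv0
  -- the five "good index" facts
  have hg0 : φ 1 - (φ 4 - 2 * π) ≤ π →
      (0 : ℝ × ℝ) ∈ convexHull ℝ (v '' {i : Fin 5 | i ≠ 0}) := by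
    intro h
    exact good_aux v lam hlam' hlsum hv0' 0 4 1 (by decide) (by decide) (by decide)
      (φ 4 - 2 * π) (φ 0) (φ 1)
      (by rw [hv 4, Real.cos_sub_two_pi, Real.sin_sub_two_pi]) (hv 0) (hv 1)
      (by linarith) h01 h
  have hg1 : φ 2 - φ 0 ≤ π →
      (0 : ℝ × ℝ) ∈ convexHull ℝ (v '' {i : Fin 5 | i ≠ 1}) := fun h =>
    good_aux v lam hlam' hlsum hv0' 1 0 2 (by decide) (by decide) (by decide)
      (φ 0) (φ 1) (φ 2) (hv 0) (hv 1) (hv 2) h01 h12 h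
  have hg2 : φ 3 - φ 1 ≤ π →
      (0 : ℝ × ℝ) ∈ convexHull ℝ (v '' {i : Fin 5 | i ≠ 2}) := fun h =>
    good_aux v lam hlam' hlsum hv0' 2 1 3 (by decide) (by decide) (by decide)
      (φ 1) (φ 2) (φ 3) (hv 1) (hv 2) (hv 3) h12 h23 h
  have hg3 : φ 4 - φ 2 ≤ π →
      (0 : ℝ × ℝ) ∈ convexHull ℝ (v '' {i : Fin 5 | i ≠ 3}) := fun h =>
    good_aux v lam hlam' hlsum hv0' 3 2 4 (by decide) (by decide) (by decide)
      (φ 2) (φ 3) (φ 4) (hv 2) (hv 3) (hv 4) h23 h34 h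
  have hg4 : (φ 0 + 2 * π) - φ 3 ≤ π →
      (0 : ℝ × ℝ) ∈ convexHull ℝ (v '' {i : Fin 5 | i ≠ 4}) := by
    intro h
    exact good_aux v lam hlam' hlsum hv0' 4 3 0 (by decide) (by decide) (by decide)
      (φ 3) (φ 4) (φ 0 + 2 * π)
      (hv 3) (hv 4) (by rw [hv 0, Real.cos_add_two_pi, Real.sin_add_two_pi])
      h34 (by linarith) h
  -- the widths of the merged gaps
  set D : Fin 5 → ℝ :=
    ![φ 1 - (φ 4 - 2 * π), φ 2 - φ 0, φ 3 - φ 1, φ 4 - φ 2, (φ 0 + 2 * π) - φ 3] with hD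
  classical
  set b : Fin 5 → Bool := fun j => @decide (π < D j) (Classical.propDecidable _) with hb
  have hbiff : ∀ j, b j = false ↔ D j ≤ π := by
    intro j
    rw [hb]
    simp only [decide_eq_false_iff_not, not_lt]
  have hbtrue : ∀ j, b j = true → π < D j := by
    intro j h
    by_contra hc
    have h2 := (hbiff j).2 (not_lt.1 hc)
    rw [h] at h2
    simp at h2
  refine ⟨Finset.univ.filter (fun j => b j = false), ?_, ?_⟩
  · apply card_aux b
    · rintro ⟨hx, hy⟩
      have h1 := hbtrue 0 hx; have h2 := hbtrue 2 hy
      simp only [hD, Matrix.cons_val] at h1 h2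
      norm_num [Matrix.cons_val_zero, Matrix.cons_val_one] at h1 h2
      linarith
    · rintro ⟨hx, hy⟩
      have h1 := hbtrue 1 hx; have h2 := hbtrue 3 hy
      simp only [hD, Matrix.cons_val] at h1 h2
      norm_num at h1 h2
      linarith
    · rintro ⟨hx, hy⟩
      have h1 := hbtrue 2 hx; have h2 := hbtrue 4 hy
      simp only [hD, Matrix.cons_val] at h1 h2
      norm_num at h1 h2
      linarith
    · rintro ⟨hx, hy⟩
      have h1 := hbtrue 0 hx; have h2 := hbtrue 3 hy
      simp only [hD, Matrix.cons_val] at h1 h2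
      norm_num at h1 h2
      linarith
    · rintro ⟨hx, hy⟩
      have h1 := hbtrue 1 hx; have h2 := hbtrue 4 hy
      simp only [hD, Matrix.cons_val] at h1 h2
      norm_num at h1 h2
      linarith
  · intro j hj
    have hDj : D j ≤ π := (hbiff j).1 (Finset.mem_filter.1 hj).2
    fin_cases j
    · apply hg0; simpa [hD] using hDj
    · apply hg1; simpa [hD] using hDj
    · apply hg2; simpa [hD] using hDj
    · apply hg3; simpa [hD] using hDj
    · apply hg4; simpa [hD] using hDj
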